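/- arXiv:2403.16260 — 2 statements merged into one kernel-verified Lean document; each statement's English description precedes it below -/
import Mathlib

section
/- Let μ > 0, a ∈ (0,1), b > 0, c > 1, and define T(x, a) = a·Φ(x/a) − Φ(x) where Φ is the standard normal CDF. Then μ·[T(bc, a) − T(b, a)] < 0. -/
open Real MeasureTheory

noncomputable def stdPdf (t : ℝ) : ℝ := Real.exp (-t^2/2) / Real.sqrt (2*Real.pi)

noncomputable def stdCdf (x : ℝ) : ℝ := ∫ t in Set.Iic x, stdPdf t

lemma stdPdf_integrable : Integrable stdPdf := by
  have h := (integrable_exp_neg_mul_sq (by norm_num : (0:ℝ) < 1/2)).div_const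
      (Real.sqrt (2*Real.pi))
  convert h using 2 with t
  simp [stdPdf]
  ring_nf

lemma stdPdf_continuous : Continuous stdPdf := by
  unfold stdPdf
  fun_prop

lemma cdf_diff (x y : ℝ) : stdCdf y - stdCdf x = ∫ t in x..y, stdPdf t := by
  exact intervalIntegral.integral_Iic_sub_Iic stdPdf_integrable.integrableOn
    stdPdf_integrable.integrableOn

lemma stdPdf_lt (s a : ℝ) (hs : 0 < s) (ha0 : 0 < a) (ha1 : a < 1) :
    stdPdf (s/a) < stdPdf s := by
  have h1 : s < s / a := by
    rw [lt_div_iff₀ ha0]; nlinarith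
  have h2 : s^2 < (s/a)^2 := by nlinarith [sq_nonneg (s/a - s)]
  have : Real.exp (-(s/a)^2/2) < Real.exp (-s^2/2) := by
    apply Real.exp_lt_exp.mpr; linarith
  have hsqrt : 0 < Real.sqrt (2*Real.pi) := Real.sqrt_pos.mpr (by positivity)
  unfold stdPdf
  gcongr

theorem T_diff_neg (μ a b c : ℝ) (hμ : 0 < μ) (ha : a ∈ Set.Ioo (0:ℝ) 1)
    (hb : 0 < b) (hc : 1 < c) :
    μ * ((a * stdCdf (b*c/a) - stdCdf (b*c)) - (a * stdCdf (b/a) - stdCdf b)) < 0 := by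
  obtain ⟨ha0, ha1⟩ := ha
  have hbc : b < b * c := by nlinarith
  apply mul_neg_of_pos_of_neg hμ
  have key : (a * stdCdf (b*c/a) - stdCdf (b*c)) - (a * stdCdf (b/a) - stdCdf b)
      = ∫ s in b..(b*c), (stdPdf (s/a) - stdPdf s) := by
    have h1 : a * stdCdf (b*c/a) - a * stdCdf (b/a)
        = ∫ s in b..(b*c), stdPdf (s/a) := by
      rw [← mul_sub, cdf_diff, intervalIntegral.integral_comp_div _ (ne_of_gt ha0)]
      simp [smul_eq_mul]
    have h2 : stdCdf (b*c) - stdCdf b = ∫ s in b..(b*c), stdPdf s := cdf_diff b (b*c)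
    rw [intervalIntegral.integral_sub, ← h1, ← h2]
    · ring
    · exact ((stdPdf_continuous.comp (continuous_id.div_const a)).intervalIntegrable _ _)
    · exact stdPdf_continuous.intervalIntegrable _ _
  rw [key]
  have : (0:ℝ) < ∫ s in b..(b*c), (stdPdf s - stdPdf (s/a)) := by
    apply intervalIntegral.intervalIntegral_pos_of_pos_on
    · exact (stdPdf_continuous.sub
        (stdPdf_continuous.comp (continuous_id.div_const a))).intervalIntegrable _ _
    · intro x hx
      have hx0 : 0 < x := lt_trans hb hx.1
      have := stdPdf_lt x a hx0 ha0 ha1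
      linarith
    · exact hbc
  have heq : (∫ s in b..(b*c), (stdPdf (s/a) - stdPdf s))
      = -∫ s in b..(b*c), (stdPdf s - stdPdf (s/a)) := by
    rw [← intervalIntegral.integral_neg]; congr 1; funext s; ring
  rw [heq]; linarith
end

section
/- Let V(x, a, c) = σ·[(1/c)U(xc,a) − U(x,a) + (4(a−1)/√(2π))(1 − 1/c)] with U(x,a) = a²φ(x/a) − φ(x), φ the standard normal PDF, and σ > 0. Then for all x > 0, a ∈ (0,1), and c > 1, V(x, a, c) < 0. -/
open Real MeasureTheory

noncomputable def U (x a : ℝ) : ℝ := a^2 * stdPdf (x/a) - stdPdf x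

noncomputable def V (σ x a c : ℝ) : ℝ :=
  σ * ((1/c) * U (x*c) a - U x a + (4*(a-1)/Real.sqrt (2*Real.pi)) * (1 - 1/c))

lemma sqrt2pi_pos : 0 < Real.sqrt (2*Real.pi) := Real.sqrt_pos.2 (by positivity)

lemma stdPdf_pos (t : ℝ) : 0 < stdPdf t := div_pos (Real.exp_pos _) sqrt2pi_pos

lemma hasDerivAt_stdPdf (t : ℝ) : HasDerivAt stdPdf (-t * stdPdf t) t := by
  have h1 : HasDerivAt (fun s : ℝ => -s^2/2) (-t) t := by
    have h := ((hasDerivAt_pow 2 t).neg).div_const 2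
    refine h.congr_deriv ?_
    push_cast
    ring
  have h2 := h1.exp.div_const (Real.sqrt (2*Real.pi))
  refine h2.congr_deriv ?_
  unfold stdPdf
  ring

lemma aux1 (r : ℝ) (hr : 0 ≤ r) : (2+2*r) * Real.exp (-r) ≤ 2 := by
  have h := Real.add_one_le_exp r
  have hmul : Real.exp r * Real.exp (-r) = 1 := by
    rw [← Real.exp_add]; simp
  have hp := Real.exp_pos (-r)
  nlinarith

lemma aux2 (w : ℝ) (hw : 0 ≤ w) : w^2 * Real.exp (-w) ≤ 4 * Real.exp (-2) := by
  have h := Real.add_one_le_exp (w/2 - 1)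
  have h2 : (w/2)^2 ≤ (Real.exp (w/2-1))^2 := by
    have h0 : 0 ≤ w/2 := by linarith
    nlinarith
  have h3 : (Real.exp (w/2-1))^2 = Real.exp (w - 2) := by
    rw [sq, ← Real.exp_add]; ring_nf
  rw [h3] at h2
  have h4 : Real.exp (w-2) * Real.exp (-w) = Real.exp (-2) := by
    rw [← Real.exp_add]; ring_nf
  have h5 : (w/2)^2 * Real.exp (-w) ≤ Real.exp (w-2) * Real.exp (-w) :=
    mul_le_mul_of_nonneg_right h2 (Real.exp_pos (-w)).le
  rw [h4] at h5
  nlinarith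

lemma aux3 (w : ℝ) (hw : 0 ≤ w) : w^3 * Real.exp (-w) ≤ 27 * Real.exp (-3) := by
  have h := Real.add_one_le_exp (w/3 - 1)
  have h2 : (w/3)^3 ≤ (Real.exp (w/3-1))^3 := by
    apply pow_le_pow_left₀ (by linarith) (by linarith)
  have h3 : (Real.exp (w/3-1))^3 = Real.exp (w - 3) := by
    rw [show (3:ℕ) = 3 from rfl, ← Real.exp_nat_mul]
    norm_num
    ring_nf
  rw [h3] at h2
  have h4 : Real.exp (w-3) * Real.exp (-w) = Real.exp (-3) := by
    rw [← Real.exp_add]; ring_nf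
  have h5 : (w/3)^3 * Real.exp (-w) ≤ Real.exp (w-3) * Real.exp (-w) :=
    mul_le_mul_of_nonneg_right h2 (Real.exp_pos (-w)).le
  rw [h4] at h5
  nlinarith

lemma core (p q : ℝ) (hp : 0 < p) (hpq : p ≤ q) :
    p*q^3*Real.exp (-q^2/2) + (2+p^2)*Real.exp (-p^2/2) ≤ 4 := by
  have hq : 0 < q := lt_of_lt_of_le hp hpq
  by_cases hp53 : p ≤ 5/3
  · -- q^3 * exp(-q^2/2) ≤ 6/5
    have hX0 : 0 ≤ q^3 * Real.exp (-q^2/2) := by positivity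
    have hXsq : (q^3 * Real.exp (-q^2/2))^2 = (q^2)^3 * Real.exp (-q^2) := by
      rw [mul_pow, sq (Real.exp _), ← Real.exp_add]
      ring_nf
    have h27 := aux3 (q^2) (sq_nonneg q)
    have he3 : Real.exp 3 = Real.exp 1 * Real.exp 1 * Real.exp 1 := by
      rw [← Real.exp_add, ← Real.exp_add]; norm_num
    have hebd := Real.exp_one_gt_d9
    have hepos := Real.exp_pos (3:ℝ)
    have hinv3 : Real.exp 3 * Real.exp (-3) = 1 := by
      rw [← Real.exp_add]; simp
    have h36 : 27 * Real.exp (-3) ≤ 36/25 := by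
      nlinarith [Real.exp_pos (-3:ℝ)]
    have hq3 : q^3 * Real.exp (-q^2/2) ≤ 6/5 := by
      nlinarith
    have h1 : p * q^3 * Real.exp (-q^2/2) ≤ 2 := by
      have hh : p * (q^3 * Real.exp (-q^2/2)) ≤ (5/3) * (6/5) :=
        mul_le_mul hp53 hq3 hX0 (by norm_num)
      nlinarith
    have h2 : (2+p^2)*Real.exp (-p^2/2) ≤ 2 := by
      have ha1 := aux1 (p^2/2) (by positivity)
      have he : Real.exp (-(p^2/2)) = Real.exp (-p^2/2) := by ring_nf
      rw [he] at ha1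
      nlinarith
    linarith
  · push_neg at hp53
    have hB : 0 < Real.exp (-q^2/2) := Real.exp_pos _
    have hq4 : q^4 * Real.exp (-q^2/2) ≤ 16 * Real.exp (-2) := by
      have ha2 := aux2 (q^2/2) (by positivity)
      have he : Real.exp (-(q^2/2)) = Real.exp (-q^2/2) := by ring_nf
      rw [he] at ha2
      nlinarith
    have h1 : p * q^3 * Real.exp (-q^2/2) ≤ 16 * Real.exp (-2) := by
      have hle : p * q^3 ≤ q^4 := by nlinarith [mul_le_mul_of_nonneg_right hpq (pow_nonneg hq.le 3)]
      nlinarith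
    have h2 : (2+p^2)*Real.exp (-p^2/2) ≤ (43/9) * Real.exp (-(25/18)) := by
      have h := Real.add_one_le_exp (p^2/2 - 25/18)
      have hmul : Real.exp (p^2/2 - 25/18) * Real.exp (-p^2/2) = Real.exp (-(25/18)) := by
        rw [← Real.exp_add]; ring_nf
      have hA : 0 < Real.exp (-p^2/2) := Real.exp_pos _
      have hkey : (2+p^2) ≤ (43/9) * Real.exp (p^2/2 - 25/18) := by
        nlinarith
      calc (2+p^2)*Real.exp (-p^2/2)
          ≤ ((43/9) * Real.exp (p^2/2 - 25/18)) * Real.exp (-p^2/2) :=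
            mul_le_mul_of_nonneg_right hkey hA.le
        _ = (43/9) * Real.exp (-(25/18)) := by rw [mul_assoc, hmul]
    have h3 : 16 * Real.exp (-2) + (43/9) * Real.exp (-(25/18)) ≤ 4 := by
      have he1118 : (7:ℝ)/18 ≤ Real.exp (-(11/18)) := by
        have := Real.add_one_le_exp (-(11/18) : ℝ)
        linarith
      have hsplit : Real.exp (-(25/18)) = Real.exp (-2) * Real.exp (11/18) := by
        rw [← Real.exp_add]; norm_num
      have hinv : Real.exp (11/18) * Real.exp (-(11/18)) = 1 := by
        rw [← Real.exp_add]; simp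
      have h1118 : Real.exp (11/18) ≤ 18/7 := by
        nlinarith [Real.exp_pos (-(11/18):ℝ)]
      have hup : Real.exp (-(25/18)) ≤ (18/7) * Real.exp (-2) := by
        rw [hsplit]
        nlinarith [Real.exp_pos (-2:ℝ)]
      have he2 : Real.exp (-2:ℝ) ≤ 1/7.29 := by
        have hinv2 : Real.exp 2 * Real.exp (-2) = 1 := by
          rw [← Real.exp_add]; simp
        have hexp2 : Real.exp 2 = Real.exp 1 * Real.exp 1 := by
          rw [← Real.exp_add]; norm_num
        have := Real.exp_one_gt_d9
        nlinarith [Real.exp_pos (-2:ℝ)]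
      nlinarith [Real.exp_pos (-2:ℝ)]
    linarith

lemma W_deriv_bound (x y t : ℝ) (hx : 0 < x) (hxy : x ≤ y) (ht0 : 0 < t) (ht1 : t < 1) :
    x*y^3/t^3 * stdPdf (y/t) + (2*t + x^2/t) * stdPdf (x/t) < 4 / Real.sqrt (2*Real.pi) := by
  have hp : 0 < x/t := div_pos hx ht0
  have hpq : x/t ≤ y/t := by gcongr
  have hcore := core (x/t) (y/t) hp hpq
  have hS := sqrt2pi_pos
  have key : x*y^3/t^3 * stdPdf (y/t) + (2*t + x^2/t) * stdPdf (x/t)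
      = t * ((x/t)*(y/t)^3*Real.exp (-(y/t)^2/2) + (2+(x/t)^2)*Real.exp (-(x/t)^2/2))
        / Real.sqrt (2*Real.pi) := by
    unfold stdPdf
    field_simp
  rw [key, div_lt_div_iff₀ hS hS]
  have h1 : t * (x / t * (y / t) ^ 3 * Real.exp (-(y / t) ^ 2 / 2) + (2 + (x / t) ^ 2) * Real.exp (-(x / t) ^ 2 / 2)) < 4 := by
    nlinarith
  nlinarith

lemma W_hasDeriv (x y t : ℝ) (ht : t ≠ 0) :
    HasDerivAt (fun s : ℝ => x*y*stdPdf (y/s) + s^2 * stdPdf (x/s))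
      (x*y^3/t^3 * stdPdf (y/t) + (2*t + x^2/t) * stdPdf (x/t)) t := by
  have hy : HasDerivAt (fun s : ℝ => y/s) ((0*t - y*1)/t^2) t :=
    (hasDerivAt_const t y).div (hasDerivAt_id t) ht
  have hx' : HasDerivAt (fun s : ℝ => x/s) ((0*t - x*1)/t^2) t :=
    (hasDerivAt_const t x).div (hasDerivAt_id t) ht
  have h2 : HasDerivAt (fun s : ℝ => stdPdf (y/s))
      ((-(y/t) * stdPdf (y/t)) * ((0*t - y*1)/t^2)) t :=
    (hasDerivAt_stdPdf (y/t)).comp t hy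
  have h3 : HasDerivAt (fun s : ℝ => stdPdf (x/s))
      ((-(x/t) * stdPdf (x/t)) * ((0*t - x*1)/t^2)) t :=
    (hasDerivAt_stdPdf (x/t)).comp t hx'
  have h4 := (h2.const_mul (x*y)).add ((hasDerivAt_pow 2 t).mul h3)
  refine h4.congr_deriv ?_
  push_cast
  field_simp
  ring

lemma AB_lt (x y a : ℝ) (hx : 0 < x) (hxy : x ≤ y) (ha0 : 0 < a) (ha1 : a < 1) :
    x*y*(stdPdf y - stdPdf (y/a)) + (stdPdf x - a^2 * stdPdf (x/a))
      < 4*(1-a)/Real.sqrt (2*Real.pi) := by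
  set W : ℝ → ℝ := fun s => x*y*stdPdf (y/s) + s^2 * stdPdf (x/s) with hWdef
  set W' : ℝ → ℝ := fun s => x*y^3/s^3 * stdPdf (y/s) + (2*s + x^2/s) * stdPdf (x/s) with hW'def
  have hcont : ContinuousOn W (Set.Icc a 1) := fun s hs =>
    (W_hasDeriv x y s (ne_of_gt (lt_of_lt_of_le ha0 hs.1))).continuousAt.continuousWithinAt
  have hioo : ∀ s ∈ Set.Ioo a 1, HasDerivAt W (W' s) s := fun s hs =>
    W_hasDeriv x y s (ne_of_gt (ha0.trans hs.1))
  obtain ⟨ξ, hξ, hslope⟩ := exists_hasDerivAt_eq_slope W W' ha1 hcont hioo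
  have h1a : (0:ℝ) < 1 - a := by linarith
  have hW1 : W 1 = x*y*stdPdf y + stdPdf x := by simp [hWdef]
  have hWa : W a = x*y*stdPdf (y/a) + a^2*stdPdf (x/a) := by simp [hWdef]
  have hb : W' ξ < 4 / Real.sqrt (2*Real.pi) :=
    W_deriv_bound x y ξ hx hxy (ha0.trans hξ.1) hξ.2
  have hEq : W 1 - W a = W' ξ * (1 - a) := by
    rw [hslope]
    field_simp
  have hLHS : x*y*(stdPdf y - stdPdf (y/a)) + (stdPdf x - a^2 * stdPdf (x/a))
      = W 1 - W a := by
    rw [hW1, hWa]; ring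
  rw [hLHS, hEq]
  calc W' ξ * (1 - a) < (4 / Real.sqrt (2*Real.pi)) * (1 - a) :=
        mul_lt_mul_of_pos_right hb h1a
    _ = 4*(1-a)/Real.sqrt (2*Real.pi) := by ring

theorem V_neg (σ x a c : ℝ) (hσ : 0 < σ) (hx : 0 < x)
    (ha : a ∈ Set.Ioo (0:ℝ) 1) (hc : 1 < c) :
    V σ x a c < 0 := by
  obtain ⟨ha0, ha1⟩ := ha
  have hc0 : (0:ℝ) < c := lt_trans one_pos hc
  set K : ℝ := 4*(a-1)/Real.sqrt (2*Real.pi) with hK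
  set g : ℝ → ℝ := fun s => U (x*s) a - s * U x a + K*(s-1) with hg
  have hgder : ∀ s : ℝ, HasDerivAt g
      (x*(x*s)*(stdPdf (x*s) - stdPdf (x*s/a)) - U x a + K) s := by
    intro s
    have i1 : HasDerivAt (fun s : ℝ => x*s/a) (x*1/a) s :=
      ((hasDerivAt_id s).const_mul x).div_const a
    have i2 : HasDerivAt (fun s : ℝ => stdPdf (x*s/a))
        ((-(x*s/a) * stdPdf (x*s/a)) * (x*1/a)) s :=
      HasDerivAt.comp (h₂ := stdPdf) s (hasDerivAt_stdPdf (x*s/a)) i1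
    have i3 : HasDerivAt (fun s : ℝ => x*s) (x*1) s :=
      (hasDerivAt_id s).const_mul x
    have i4 : HasDerivAt (fun s : ℝ => stdPdf (x*s))
        ((-(x*s) * stdPdf (x*s)) * (x*1)) s :=
      (hasDerivAt_stdPdf (x*s)).comp s i3
    have i5 := ((i2.const_mul (a^2)).sub i4).sub ((hasDerivAt_id s).mul_const (U x a))
    have i6 := i5.add (((hasDerivAt_id s).sub_const 1).const_mul K)
    have hfun : g = fun s : ℝ => ((a^2 * stdPdf (x*s/a) - stdPdf (x*s)) - s * U x a) + K*(s-1) := by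
      funext s
      simp only [hg, U]
    rw [hfun]
    refine i6.congr_deriv ?_
    field_simp [ne_of_gt ha0]
    unfold U
    ring
  have dneg : ∀ s ∈ Set.Ioo (1:ℝ) c,
      x*(x*s)*(stdPdf (x*s) - stdPdf (x*s/a)) - U x a + K < 0 := by
    intro s hs
    have hxs : x ≤ x*s := by nlinarith [hs.1]
    have hAB := AB_lt x (x*s) a hx hxs ha0 ha1
    have hKrel : 4*(1-a)/Real.sqrt (2*Real.pi) = -K := by
      rw [hK]; ring
    rw [hKrel] at hAB
    simp only [U] at *
    linarith
  have hanti : StrictAntiOn g (Set.Icc 1 c) := by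
    apply strictAntiOn_of_deriv_neg (convex_Icc 1 c)
      (fun s _ => (hgder s).continuousAt.continuousWithinAt)
    intro s hs
    rw [interior_Icc] at hs
    rw [(hgder s).deriv]
    exact dneg s hs
  have hgc : g c < g 1 :=
    hanti (Set.left_mem_Icc.2 hc.le) (Set.right_mem_Icc.2 hc.le) hc
  have hg1 : g 1 = 0 := by
    simp [hg]
  rw [hg1] at hgc
  have hgcval : g c = U (x*c) a - c * U x a + K*(c-1) := by rw [hg]
  have hV : V σ x a c = σ * (1/c) * g c := by
    rw [hgcval]
    unfold V
    rw [← hK]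
    field_simp
  rw [hV]
  exact mul_neg_of_pos_of_neg (by positivity) hgc
end
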